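/- Let Z, V, Y be real-valued random variables and f : ℝ × ℝ → ℝ a function such that (1) f(z, v) is non-increasing in z for every fixed v, (2) Z and V are conditionally independent given Y, and (3) E[Z | Y] = E[Z] almost surely. Then E[Z · f(Z, V)] ≤ E[Z] · E[f(Z, V)]. -/

import Mathlib

open MeasureTheory ProbabilityTheory Set

lemma chebyshev_assoc (ρ : Measure ℝ) [IsProbabilityMeasure ρ] (h : ℝ → ℝ)
    (hh : Antitone h) (hid : Integrable (fun x : ℝ => x) ρ) (hhint : Integrable h ρ)
    (hmul : Integrable (fun x => x * h x) ρ) :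
    ∫ x, x * h x ∂ρ ≤ (∫ x, x ∂ρ) * ∫ x, h x ∂ρ := by
  have hF : ∀ p : ℝ × ℝ, (p.1 - p.2) * (h p.1 - h p.2) ≤ 0 := by
    intro p
    rcases le_total p.1 p.2 with hle | hle
    · exact mul_nonpos_of_nonpos_of_nonneg (by linarith) (by linarith [hh hle])
    · exact mul_nonpos_of_nonneg_of_nonpos (by linarith) (by linarith [hh hle])
  have hint0 : ∫ p : ℝ × ℝ, (p.1 - p.2) * (h p.1 - h p.2) ∂(ρ.prod ρ) ≤ 0 :=
    integral_nonpos hF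
  have h1 : Integrable (fun p : ℝ × ℝ => (p.1 * h p.1) * 1) (ρ.prod ρ) :=
    hmul.mul_prod (integrable_const 1)
  have h2 : Integrable (fun p : ℝ × ℝ => p.1 * h p.2) (ρ.prod ρ) := hid.mul_prod hhint
  have h3 : Integrable (fun p : ℝ × ℝ => h p.1 * p.2) (ρ.prod ρ) := hhint.mul_prod hid
  have h4 : Integrable (fun p : ℝ × ℝ => 1 * (p.2 * h p.2)) (ρ.prod ρ) :=
    (integrable_const 1).mul_prod hmul
  have e : (fun p : ℝ × ℝ => (p.1 - p.2) * (h p.1 - h p.2))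
      = fun p : ℝ × ℝ => ((p.1 * h p.1) * 1 - p.1 * h p.2) - (h p.1 * p.2 - 1 * (p.2 * h p.2)) := by
    funext p; ring
  rw [e] at hint0
  have I0 := integral_sub (h1.sub h2) (h3.sub h4)
  have I1 := integral_sub h1 h2
  have I2 := integral_sub h3 h4
  have A1 := integral_prod_mul (μ := ρ) (ν := ρ) (fun x => x * h x) (fun _ => (1:ℝ))
  have A2 := integral_prod_mul (μ := ρ) (ν := ρ) (fun x : ℝ => x) h
  have A3 := integral_prod_mul (μ := ρ) (ν := ρ) h (fun x : ℝ => x)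
  have A4 := integral_prod_mul (μ := ρ) (ν := ρ) (fun _ => (1:ℝ)) (fun x => x * h x)
  simp only [Pi.sub_apply] at I0
  beta_reduce at I0 I1 I2 A1 A2 A3 A4
  rw [I0, I1, I2, A1, A2, A3, A4] at hint0
  simp only [integral_const, measure_univ, ENNReal.toReal_one, probReal_univ, smul_eq_mul, one_mul, mul_one] at hint0
  nlinarith [hint0]

theorem stmt_0_aux
    {Ω : Type*} (m' : MeasurableSpace Ω) {mΩ : MeasurableSpace Ω} [StandardBorelSpace Ω]
    (μ : Measure Ω) [IsProbabilityMeasure μ]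
    (Z V : Ω → ℝ) (f : ℝ → ℝ → ℝ)
    (hm' : m' ≤ mΩ)
    (hZ : Measurable Z) (hV : Measurable V)
    (hf : Measurable fun p : ℝ × ℝ => f p.1 p.2)
    (hmono : ∀ v : ℝ, Antitone fun z => f z v)
    (hindep : CondIndepFun m' hm' Z V μ)
    (hcond : μ[Z | m'] =ᵐ[μ] fun _ => ∫ ω, Z ω ∂μ)
    (hZint : Integrable Z μ)
    (hfint : Integrable (fun ω => f (Z ω) (V ω)) μ)
    (hZfint : Integrable (fun ω => Z ω * f (Z ω) (V ω)) μ) :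
    ∫ ω, Z ω * f (Z ω) (V ω) ∂μ ≤ (∫ ω, Z ω ∂μ) * ∫ ω, f (Z ω) (V ω) ∂μ := by
  have hpairm : Measurable fun x => (Z x, V x) := hZ.prodMk hV
  -- rectangles a.e. factorization
  have hindep' : Kernel.IndepFun Z V (condExpKernel μ m') (μ.trim hm') := hindep
  have hrect : ∀ᵐ ω ∂μ, ∀ (q r : ℚ),
      (condExpKernel μ m' ω) (Z ⁻¹' Set.Iic (q:ℝ) ∩ V ⁻¹' Set.Iic (r:ℝ))
        = (condExpKernel μ m' ω) (Z ⁻¹' Set.Iic (q:ℝ))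
          * (condExpKernel μ m' ω) (V ⁻¹' Set.Iic (r:ℝ)) := by
    rw [ae_all_iff]
    intro q
    rw [ae_all_iff]
    intro r
    exact ae_of_ae_trim hm'
      (hindep'.measure_inter_preimage_eq_mul _ _ measurableSet_Iic measurableSet_Iic)
  -- the generating π-system of ℝ
  have hS_span : IsCountablySpanning (⋃ a : ℚ, {Set.Iic (a:ℝ)}) := by
    refine ⟨fun n => Set.Iic ((n:ℚ):ℝ), fun n => Set.mem_iUnion.2 ⟨n, rfl⟩, ?_⟩
    ext x
    simp only [Set.mem_iUnion, Set.mem_Iic, Set.mem_univ, iff_true]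
    obtain ⟨n, hn⟩ := exists_nat_gt x
    exact ⟨n, by push_cast; exact hn.le⟩
  have hS_pi : IsPiSystem (⋃ a : ℚ, {Set.Iic (a:ℝ)}) := by
    rintro s hs t ht -
    simp only [Set.mem_iUnion, Set.mem_singleton_iff] at hs ht ⊢
    obtain ⟨a, rfl⟩ := hs
    obtain ⟨b, rfl⟩ := ht
    exact ⟨min a b, by rw [Set.Iic_inter_Iic]; push_cast; rfl⟩
  have hgen : (inferInstance : MeasurableSpace (ℝ × ℝ))
      = MeasurableSpace.generateFrom
        (Set.image2 (· ×ˢ ·) (⋃ a : ℚ, {Set.Iic (a:ℝ)}) (⋃ a : ℚ, {Set.Iic (a:ℝ)})) := by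
    have hR : (inferInstance : MeasurableSpace ℝ) = MeasurableSpace.generateFrom
        (⋃ a : ℚ, {Set.Iic (a:ℝ)}) := by
      rw [BorelSpace.measurable_eq (α := ℝ), Real.borel_eq_generateFrom_Iic_rat]
    rw [← generateFrom_prod_eq hS_span hS_span, ← hR]
  -- a.e. product factorization of conditional laws
  have hfact : ∀ᵐ ω ∂μ,
      Measure.map (fun x => (Z x, V x)) (condExpKernel μ m' ω)
        = (Measure.map Z (condExpKernel μ m' ω)).prod
            (Measure.map V (condExpKernel μ m' ω)) := by
    filter_upwards [hrect] with ω hω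
    haveI : IsProbabilityMeasure (Measure.map Z (condExpKernel μ m' ω)) :=
      Measure.isProbabilityMeasure_map hZ.aemeasurable
    haveI : IsProbabilityMeasure (Measure.map V (condExpKernel μ m' ω)) :=
      Measure.isProbabilityMeasure_map hV.aemeasurable
    haveI : IsProbabilityMeasure (Measure.map (fun x => (Z x, V x)) (condExpKernel μ m' ω)) :=
      Measure.isProbabilityMeasure_map hpairm.aemeasurable
    refine MeasureTheory.ext_of_generate_finite _ hgen
      (IsPiSystem.prod hS_pi hS_pi) ?_ (by simp)
    rintro s hs
    rw [Set.mem_image2] at hs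
    obtain ⟨u, hu, v, hv, rfl⟩ := hs
    simp only [Set.mem_iUnion, Set.mem_singleton_iff] at hu hv
    obtain ⟨q, rfl⟩ := hu
    obtain ⟨r, rfl⟩ := hv
    rw [Measure.map_apply hpairm (measurableSet_Iic.prod measurableSet_Iic),
      Measure.prod_prod, Measure.map_apply hZ measurableSet_Iic,
      Measure.map_apply hV measurableSet_Iic, Set.mk_preimage_prod]
    exact hω q r
  -- conditional mean of Z is constant a.e.
  have hconst : ∀ᵐ ω ∂μ, ∫ x, Z x ∂(condExpKernel μ m' ω) = ∫ x, Z x ∂μ := by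
    filter_upwards [condExp_ae_eq_integral_condExpKernel hm' hZint, hcond] with ω e1 e2
    rw [← e1]; exact e2
  -- a.e. integrabilities under the kernel
  have hZae : ∀ᵐ ω ∂μ, Integrable Z (condExpKernel μ m' ω) := hZint.condExpKernel_ae
  have hfae : ∀ᵐ ω ∂μ, Integrable (fun x => f (Z x) (V x)) (condExpKernel μ m' ω) :=
    hfint.condExpKernel_ae
  have hZfae : ∀ᵐ ω ∂μ, Integrable (fun x => Z x * f (Z x) (V x)) (condExpKernel μ m' ω) :=
    hZfint.condExpKernel_ae
  -- key a.e. inequality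
  have key : ∀ᵐ ω ∂μ, ∫ x, Z x * f (Z x) (V x) ∂(condExpKernel μ m' ω)
      ≤ (∫ x, Z x ∂μ) * ∫ x, f (Z x) (V x) ∂(condExpKernel μ m' ω) := by
    filter_upwards [hfact, hconst, hZae, hfae, hZfae] with ω hfactω hconstω hZκ hfκ hZfκ
    set κω := condExpKernel μ m' ω with hκω
    set ρ := Measure.map Z κω with hρ
    set σ := Measure.map V κω with hσ
    haveI : IsProbabilityMeasure ρ := Measure.isProbabilityMeasure_map hZ.aemeasurable
    haveI : IsProbabilityMeasure σ := Measure.isProbabilityMeasure_map hV.aemeasurable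
    have hG : Integrable (fun p : ℝ × ℝ => p.1 * f p.1 p.2) (ρ.prod σ) := by
      rw [← hfactω, integrable_map_measure
        (show Measurable fun p : ℝ × ℝ => p.1 * f p.1 p.2 from measurable_fst.mul hf).aestronglyMeasurable hpairm.aemeasurable]
      exact hZfκ
    have hH : Integrable (fun p : ℝ × ℝ => f p.1 p.2) (ρ.prod σ) := by
      rw [← hfactω, integrable_map_measure hf.aestronglyMeasurable hpairm.aemeasurable]
      exact hfκ
    have hidρ : Integrable (fun x : ℝ => x) ρ := by
      rw [hρ]
      exact (integrable_map_measure measurable_id.aestronglyMeasurable hZ.aemeasurable).2 hZκ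
    have hidval : ∫ x : ℝ, x ∂ρ = ∫ x, Z x ∂μ := by
      rw [hρ]
      exact (integral_map hZ.aemeasurable measurable_id.aestronglyMeasurable).trans hconstω
    have eG : ∫ x, Z x * f (Z x) (V x) ∂κω = ∫ p : ℝ × ℝ, p.1 * f p.1 p.2 ∂(ρ.prod σ) := by
      rw [← hfactω, integral_map hpairm.aemeasurable
        (show Measurable fun p : ℝ × ℝ => p.1 * f p.1 p.2 from measurable_fst.mul hf).aestronglyMeasurable]
    have eH : ∫ x, f (Z x) (V x) ∂κω = ∫ p : ℝ × ℝ, f p.1 p.2 ∂(ρ.prod σ) := by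
      rw [← hfactω, integral_map hpairm.aemeasurable hf.aestronglyMeasurable]
    rw [eG, eH, integral_prod_symm _ hG, integral_prod_symm _ hH, ← integral_const_mul]
    refine integral_mono_ae hG.integral_prod_right
      ((hH.integral_prod_right).const_mul _) ?_
    filter_upwards [hG.prod_left_ae, hH.prod_left_ae] with v hGv hHv
    calc ∫ z, z * f z v ∂ρ ≤ (∫ z : ℝ, z ∂ρ) * ∫ z, f z v ∂ρ :=
          chebyshev_assoc ρ (fun z => f z v) (hmono v) hidρ hHv hGv
      _ = (∫ x, Z x ∂μ) * ∫ z, f z v ∂ρ := by rw [hidval]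
  -- conclude
  have int1 : Integrable (fun ω => ∫ x, Z x * f (Z x) (V x) ∂(condExpKernel μ m' ω)) μ :=
    hZfint.integral_condExpKernel
  have int2 : Integrable (fun ω => ∫ x, f (Z x) (V x) ∂(condExpKernel μ m' ω)) μ :=
    hfint.integral_condExpKernel
  calc ∫ ω, Z ω * f (Z ω) (V ω) ∂μ
      = ∫ ω, (∫ x, Z x * f (Z x) (V x) ∂(condExpKernel μ m' ω)) ∂μ := by
        have h1 : ∫ x, (μ[fun ω => Z ω * f (Z ω) (V ω)|m']) x ∂μ
            = ∫ ω, Z ω * f (Z ω) (V ω) ∂μ := integral_condExp hm'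
        rw [← h1]
        exact integral_congr_ae (condExp_ae_eq_integral_condExpKernel hm' hZfint)
    _ ≤ ∫ ω, (∫ x, Z x ∂μ) * ∫ x, f (Z x) (V x) ∂(condExpKernel μ m' ω) ∂μ :=
        integral_mono_ae int1 (int2.const_mul _) key
    _ = (∫ x, Z x ∂μ) * ∫ ω, (∫ x, f (Z x) (V x) ∂(condExpKernel μ m' ω)) ∂μ :=
        integral_const_mul _ _
    _ = (∫ ω, Z ω ∂μ) * ∫ ω, f (Z ω) (V ω) ∂μ := by
        have h2 : ∫ x, (μ[fun ω => f (Z ω) (V ω)|m']) x ∂μ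
            = ∫ ω, f (Z ω) (V ω) ∂μ := integral_condExp hm'
        rw [← integral_congr_ae (condExp_ae_eq_integral_condExpKernel hm' hfint), h2]

theorem stmt_0
    {Ω : Type*} [MeasurableSpace Ω] [StandardBorelSpace Ω]
    (μ : Measure Ω) [IsProbabilityMeasure μ]
    (Z V Y : Ω → ℝ) (f : ℝ → ℝ → ℝ)
    (hZ : Measurable Z) (hV : Measurable V) (hY : Measurable Y)
    (hf : Measurable fun p : ℝ × ℝ => f p.1 p.2)
    (hmono : ∀ v : ℝ, Antitone fun z => f z v)
    (hindep : CondIndepFun (MeasurableSpace.comap Y inferInstance)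
      (hY.comap_le) Z V μ)
    (hcond : μ[Z | MeasurableSpace.comap Y inferInstance]
      =ᵐ[μ] fun _ => ∫ ω, Z ω ∂μ)
    (hZint : Integrable Z μ)
    (hfint : Integrable (fun ω => f (Z ω) (V ω)) μ)
    (hZfint : Integrable (fun ω => Z ω * f (Z ω) (V ω)) μ) :
    ∫ ω, Z ω * f (Z ω) (V ω) ∂μ ≤ (∫ ω, Z ω ∂μ) * ∫ ω, f (Z ω) (V ω) ∂μ :=
  stmt_0_aux _ μ Z V f hY.comap_le hZ hV hf hmono hindep hcond hZint hfint hZfint
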